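/- Assume hypothesis (R-H): A > 0, A(B−E) > C−E(b₁+b₂), D > Eb₁b₂, and (C−E(b₁+b₂))·(A(B−E)−C+E(b₁+b₂)) > A²(D−Eb₁b₂). If the auxiliary quartic h has no positive real root, then for every delay τ ≥ 0, every complex root λ of the characteristic equation P(λ) = 0 satisfies Re λ < 0 (i.e., the trivial rest point is linearly stable for all delays). -/

import Mathlib

noncomputable section

/-- Coefficient A = b₁+b₂−2a -/
def cA (a b₁ b₂ : ℝ) : ℝ := b₁ + b₂ - 2*a
/-- Coefficient B = b₁b₂−2a(b₁+b₂)+a²+2 -/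
def cB (a b₁ b₂ : ℝ) : ℝ := b₁*b₂ - 2*a*(b₁+b₂) + a^2 + 2
/-- Coefficient C = (a²+1)(b₁+b₂)−2ab₁b₂−2a -/
def cC (a b₁ b₂ : ℝ) : ℝ := (a^2+1)*(b₁+b₂) - 2*a*b₁*b₂ - 2*a
/-- Coefficient D = a²b₁b₂−a(b₁+b₂)+1 -/
def cD (a b₁ b₂ : ℝ) : ℝ := a^2*b₁*b₂ - a*(b₁+b₂) + 1
/-- Coefficient E = c² -/
def cE (c : ℝ) : ℝ := c^2
/-- P̂ = A²−2B -/
def qP (a b₁ b₂ c : ℝ) : ℝ := (cA a b₁ b₂)^2 - 2*(cB a b₁ b₂)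
/-- Q̂ = B²+2D−2AC−E² -/
def qQ (a b₁ b₂ c : ℝ) : ℝ :=
  (cB a b₁ b₂)^2 + 2*(cD a b₁ b₂) - 2*(cA a b₁ b₂)*(cC a b₁ b₂) - (cE c)^2
/-- R̂ = C²−2BD−E²(b₁²+b₂²) -/
def qR (a b₁ b₂ c : ℝ) : ℝ :=
  (cC a b₁ b₂)^2 - 2*(cB a b₁ b₂)*(cD a b₁ b₂) - (cE c)^2*(b₁^2+b₂^2)
/-- Ŝ = D²−E²(b₁b₂)² -/
def qS (a b₁ b₂ c : ℝ) : ℝ := (cD a b₁ b₂)^2 - (cE c)^2*(b₁*b₂)^2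
/-- Auxiliary quartic h(z) = z⁴+P̂z³+Q̂z²+R̂z+Ŝ -/
def hq (a b₁ b₂ c z : ℝ) : ℝ :=
  z^4 + qP a b₁ b₂ c * z^3 + qQ a b₁ b₂ c * z^2 + qR a b₁ b₂ c * z + qS a b₁ b₂ c
/-- Derivative h′(z) = 4z³+3P̂z²+2Q̂z+R̂ -/
def hq' (a b₁ b₂ c z : ℝ) : ℝ :=
  4*z^3 + 3*qP a b₁ b₂ c * z^2 + 2*qQ a b₁ b₂ c * z + qR a b₁ b₂ c
/-- Characteristic function P(λ) = λ⁴+Aλ³+Bλ²+Cλ+D − E(λ+b₁)(λ+b₂)e^{−2λτ} -/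
def charP (a b₁ b₂ c τ : ℝ) (z : ℂ) : ℂ :=
  z^4 + (cA a b₁ b₂ : ℂ)*z^3 + (cB a b₁ b₂ : ℂ)*z^2 + (cC a b₁ b₂ : ℂ)*z + (cD a b₁ b₂ : ℂ)
    - (cE c : ℂ) * (z + (b₁:ℂ)) * (z + (b₂:ℂ)) * Complex.exp (-(2*z*(τ:ℂ)))

open Complex Filter Set Topology

lemma cA_swap (a b₁ b₂ : ℝ) : cA a b₂ b₁ = cA a b₁ b₂ := by unfold cA; ring
lemma cB_swap (a b₁ b₂ : ℝ) : cB a b₂ b₁ = cB a b₁ b₂ := by unfold cB; ring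
lemma cC_swap (a b₁ b₂ : ℝ) : cC a b₂ b₁ = cC a b₁ b₂ := by unfold cC; ring
lemma cD_swap (a b₁ b₂ : ℝ) : cD a b₂ b₁ = cD a b₁ b₂ := by unfold cD; ring
lemma hq_swap (a b₁ b₂ c s : ℝ) : hq a b₂ b₁ c s = hq a b₁ b₂ c s := by
  unfold hq qP qQ qR qS cA cB cC cD; ring

/-- A monic quadratic with positive real coefficients has no zero in the closed
right half plane. -/
lemma quad_ne_zero {e f : ℝ} (he : 0 < e) (hf : 0 < f) {z : ℂ} (hz : 0 ≤ z.re) :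
    z^2 + (e:ℂ)*z + (f:ℂ) ≠ 0 := by
  intro h
  have hre : (z^2 + (e:ℂ)*z + (f:ℂ)).re = 0 := by rw [h]; simp
  have him : (z^2 + (e:ℂ)*z + (f:ℂ)).im = 0 := by rw [h]; simp
  simp only [Complex.add_re, Complex.add_im, Complex.mul_re, Complex.mul_im, pow_two,
    Complex.ofReal_re, Complex.ofReal_im] at hre him
  have hy : z.im = 0 := by
    have h2 : z.im * (2*z.re + e) = 0 := by linarith
    rcases mul_eq_zero.1 h2 with h3 | h3
    · exact h3
    · nlinarith
  rw [hy] at hre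
  nlinarith

/-- 1 − a·b₁ is positive, given positivity of all quartic coefficients. -/
lemma m1_pos (a b₁ b₂ : ℝ) (ha : 0 < a) (hb₁ : 0 < b₁) (hb₂ : 0 < b₂)
    (hA : 0 < cA a b₁ b₂) (hB : 0 < cB a b₁ b₂) (hC : 0 < cC a b₁ b₂)
    (hD : 0 < cD a b₁ b₂) : 0 < 1 - a*b₁ := by
  by_contra h
  push_neg at h
  have hfD : cD a b₁ b₂ = (1-a*b₁)*(1-a*b₂) := by unfold cD; ring
  rcases eq_or_lt_of_le h with h0 | hlt
  · rw [hfD, h0, zero_mul] at hD; exact lt_irrefl 0 hD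
  · set g : ℝ → ℝ := fun r => r^2 + (b₁-a)*r + (1-a*b₁) with hg
    have hg0 : g 0 < 0 := by simp [hg]; nlinarith
    set T : ℝ := |b₁-a| + |1-a*b₁| + 1 with hT
    have hT1 : 1 ≤ T := by
      have := abs_nonneg (b₁-a); have := abs_nonneg (1-a*b₁); simp [hT]; linarith
    have hgT : 0 < g T := by
      have k1 : (-(|b₁-a|))*T ≤ (b₁-a)*T :=
        mul_le_mul_of_nonneg_right (neg_abs_le _) (by linarith)
      have k2 : -(|1-a*b₁|) ≤ 1-a*b₁ := neg_abs_le _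
      have k3 : 0 ≤ |b₁-a| := abs_nonneg _
      have k4 : 0 ≤ |1-a*b₁| := abs_nonneg _
      have : g T = T^2 + (b₁-a)*T + (1-a*b₁) := rfl
      nlinarith [sq_nonneg (T - |b₁-a|), mul_le_mul_of_nonneg_left hT1 k3]
    have hcg : ContinuousOn g (Set.Icc 0 T) := by
      apply Continuous.continuousOn; fun_prop
    obtain ⟨r, hrmem, hr0⟩ := intermediate_value_Ioo (by linarith : (0:ℝ) ≤ T) hcg
      (Set.mem_Ioo.2 ⟨hg0, hgT⟩)
    have hrpos : 0 < r := hrmem.1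
    have hquart : r^4 + cA a b₁ b₂*r^3 + cB a b₁ b₂*r^2 + cC a b₁ b₂*r + cD a b₁ b₂
        = g r * (r^2 + (b₂-a)*r + (1-a*b₂)) := by
      simp only [hg]; unfold cA cB cC cD; ring
    rw [hr0, zero_mul] at hquart
    nlinarith [pow_pos hrpos 4, pow_pos hrpos 3, pow_pos hrpos 2,
      mul_pos hA (pow_pos hrpos 3), mul_pos hB (pow_pos hrpos 2), mul_pos hC hrpos]

set_option maxHeartbeats 1000000 in
/-- Key lemma: under the Routh–Hurwitz conditions and positivity of `hq` on `[0,∞)`,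
the parameter `a` is smaller than `b₁`. -/
lemma b1_gt (a b₁ b₂ c : ℝ) (ha : 0 < a) (hb₁ : 0 < b₁) (hb₂ : 0 < b₂)
    (hA : 0 < cA a b₁ b₂) (hE0 : 0 ≤ cE c)
    (hCE : 0 < cC a b₁ b₂ - cE c*(b₁+b₂))
    (hFE : 0 < (cC a b₁ b₂ - cE c*(b₁+b₂)) *
        (cA a b₁ b₂*(cB a b₁ b₂ - cE c) - (cC a b₁ b₂ - cE c*(b₁+b₂)))
        - (cA a b₁ b₂)^2*(cD a b₁ b₂ - cE c*(b₁*b₂)))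
    (hm₁ : 0 < 1 - a*b₁) (hm₂ : 0 < 1 - a*b₂)
    (hpos : ∀ s : ℝ, 0 ≤ s → 0 < hq a b₁ b₂ c s) : a < b₁ := by
  by_contra hba
  push_neg at hba
  have hσ : 0 < b₁ + b₂ := by linarith
  have he₂ : 0 < b₂ - a := by unfold cA at hA; linarith
  have hmm : 1 - a*b₂ ≤ 1 - a*b₁ := by nlinarith
  have hΔ0 : cC a b₁ b₂*(cA a b₁ b₂*cB a b₁ b₂ - cC a b₁ b₂)
      - (cA a b₁ b₂)^2*cD a b₁ b₂ ≤ 0 := by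
    have key : cC a b₁ b₂*(cA a b₁ b₂*cB a b₁ b₂ - cC a b₁ b₂)
        - (cA a b₁ b₂)^2*cD a b₁ b₂
        = (b₁-a)*((b₂-a)*(((1-a*b₁)-(1-a*b₂))^2
            + cA a b₁ b₂*((b₁-a)*(1-a*b₂)+(b₂-a)*(1-a*b₁)))) := by
      unfold cA cB cC cD; ring
    rw [key]
    apply mul_nonpos_of_nonpos_of_nonneg (by linarith)
    apply mul_nonneg he₂.le
    have h5 : 0 ≤ (a-b₁)*((1-a*b₁)-(1-a*b₂)) :=
      mul_nonneg (by linarith) (by linarith)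
    have h6 : 0 < cA a b₁ b₂*(1-a*b₁) := mul_pos hA hm₁
    have h7 : cA a b₁ b₂ = (b₁-a) + (b₂-a) := by unfold cA; ring
    nlinarith [sq_nonneg ((1-a*b₁)-(1-a*b₂)), mul_pos hA (mul_pos he₂ hm₁),
      mul_nonneg hA.le h5]
  set F : ℝ → ℝ := fun u => (cC a b₁ b₂ - u*(b₁+b₂)) *
      (cA a b₁ b₂*(cB a b₁ b₂ - u) - (cC a b₁ b₂ - u*(b₁+b₂)))
      - (cA a b₁ b₂)^2*(cD a b₁ b₂ - u*(b₁*b₂)) with hFdef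
  have hF0 : F 0 ≤ 0 := by
    have : F 0 = cC a b₁ b₂*(cA a b₁ b₂*cB a b₁ b₂ - cC a b₁ b₂)
        - (cA a b₁ b₂)^2*cD a b₁ b₂ := by simp only [hFdef]; ring
    rw [this]; exact hΔ0
  have hFE' : 0 < F (cE c) := by simp only [hFdef]; exact hFE
  have hEpos : 0 < cE c := by
    rcases eq_or_lt_of_le hE0 with h0 | h0
    · exfalso; rw [← h0] at hFE'; linarith
    · exact h0
  obtain ⟨u, hu0, huE, hFu⟩ : ∃ u : ℝ, 0 ≤ u ∧ u < cE c ∧ F u = 0 := by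
    rcases eq_or_lt_of_le hF0 with h0 | h0
    · exact ⟨0, le_refl 0, hEpos, h0⟩
    · have hcF : ContinuousOn F (Set.Icc 0 (cE c)) := by
        apply Continuous.continuousOn; simp only [hFdef]; fun_prop
      obtain ⟨u, humem, hu⟩ := intermediate_value_Ioo hEpos.le hcF
        (Set.mem_Ioo.2 ⟨h0, hFE'⟩)
      exact ⟨u, humem.1.le, humem.2, hu⟩
  have hCu : 0 < cC a b₁ b₂ - u*(b₁+b₂) := by
    nlinarith [mul_nonneg (sub_nonneg.2 huE.le) hσ.le]
  set s : ℝ := (cC a b₁ b₂ - u*(b₁+b₂))/cA a b₁ b₂ with hsdef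
  have hs : 0 < s := div_pos hCu hA
  have hAs : cA a b₁ b₂ * s = cC a b₁ b₂ - u*(b₁+b₂) := by
    rw [hsdef]; field_simp
  have h2 : cC a b₁ b₂ - cA a b₁ b₂*s = u*(b₁+b₂) := by rw [hAs]; ring
  have h3 : s^2 - cB a b₁ b₂*s + cD a b₁ b₂ = u*(b₁*b₂ - s) := by
    have expand : (cA a b₁ b₂)^2*(s^2 - cB a b₁ b₂*s + cD a b₁ b₂ - u*(b₁*b₂ - s))
        = (cA a b₁ b₂*s)*(cA a b₁ b₂*s)
          - cA a b₁ b₂*(cB a b₁ b₂ - u)*(cA a b₁ b₂*s)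
          + (cA a b₁ b₂)^2*(cD a b₁ b₂ - u*(b₁*b₂)) := by ring
    rw [hAs] at expand
    have hFval : (cC a b₁ b₂ - u*(b₁+b₂))*(cC a b₁ b₂ - u*(b₁+b₂))
        - cA a b₁ b₂*(cB a b₁ b₂ - u)*(cC a b₁ b₂ - u*(b₁+b₂))
        + (cA a b₁ b₂)^2*(cD a b₁ b₂ - u*(b₁*b₂)) = -(F u) := by
      simp only [hFdef]; ring
    rw [hFval, hFu, neg_zero] at expand
    have hA2 : (cA a b₁ b₂)^2 ≠ 0 := pow_ne_zero 2 (ne_of_gt hA)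
    rcases mul_eq_zero.1 expand with h | h
    · exact absurd h hA2
    · linarith
  have I3 : hq a b₁ b₂ c s + (cE c)^2*(s+b₁^2)*(s+b₂^2)
      = (s^2 - cB a b₁ b₂ * s + cD a b₁ b₂)^2
        + s*(cC a b₁ b₂ - cA a b₁ b₂ * s)^2 := by
    unfold hq qP qQ qR qS; ring
  have hqs : hq a b₁ b₂ c s = (u^2 - (cE c)^2)*((s+b₁^2)*(s+b₂^2)) := by
    linear_combination I3 + (s^2 - cB a b₁ b₂*s + cD a b₁ b₂ + u*(b₁*b₂ - s))*h3
      + s*(cC a b₁ b₂ - cA a b₁ b₂*s + u*(b₁+b₂))*h2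
  have hW : 0 < (s+b₁^2)*(s+b₂^2) := by positivity
  have hneg : hq a b₁ b₂ c s < 0 := by
    rw [hqs]
    apply mul_neg_of_neg_of_pos _ hW
    have h8 : u^2 < (cE c)^2 := by
      apply pow_lt_pow_left₀ huE hu0
      norm_num
    linarith
  exact absurd (hpos s hs.le) (by linarith)

/-- Lower bound for a monic quartic with nonnegative coefficients, away from the origin. -/
lemma quart_lower (A B C D : ℝ) (hA : 0 ≤ A) (hB : 0 ≤ B) (hC : 0 ≤ C) (hD : 0 ≤ D)
    (w : ℂ) (hw : A+B+C+D+1 ≤ ‖w‖) :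
    ‖w‖^3 ≤ ‖w^4 + (A:ℂ)*w^3 + (B:ℂ)*w^2 + (C:ℂ)*w + (D:ℂ)‖ := by
  set n := ‖w‖ with hn
  have hn1 : 1 ≤ n := by linarith
  have hn0 : 0 ≤ n := by linarith
  have hr : ‖(A:ℂ)*w^3 + (B:ℂ)*w^2 + (C:ℂ)*w + (D:ℂ)‖ ≤ A*n^3 + B*n^2 + C*n + D := by
    calc ‖(A:ℂ)*w^3 + (B:ℂ)*w^2 + (C:ℂ)*w + (D:ℂ)‖
        ≤ ‖(A:ℂ)*w^3 + (B:ℂ)*w^2 + (C:ℂ)*w‖ + ‖(D:ℂ)‖ := norm_add_le _ _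
      _ ≤ ‖(A:ℂ)*w^3 + (B:ℂ)*w^2‖ + ‖(C:ℂ)*w‖ + ‖(D:ℂ)‖ := by
            gcongr; exact norm_add_le _ _
      _ ≤ ‖(A:ℂ)*w^3‖ + ‖(B:ℂ)*w^2‖ + ‖(C:ℂ)*w‖ + ‖(D:ℂ)‖ := by
            gcongr; exact norm_add_le _ _
      _ = A*n^3 + B*n^2 + C*n + D := by
            simp only [norm_mul, norm_pow, Complex.norm_real, Real.norm_eq_abs,
              _root_.abs_of_nonneg hA, _root_.abs_of_nonneg hB, _root_.abs_of_nonneg hC,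
              _root_.abs_of_nonneg hD, hn]
  have h4 : n^4 ≤ ‖w^4 + (A:ℂ)*w^3 + (B:ℂ)*w^2 + (C:ℂ)*w + (D:ℂ)‖
      + (A*n^3 + B*n^2 + C*n + D) := by
    have hw4 : (w^4 : ℂ) = (w^4 + (A:ℂ)*w^3 + (B:ℂ)*w^2 + (C:ℂ)*w + (D:ℂ))
        - ((A:ℂ)*w^3 + (B:ℂ)*w^2 + (C:ℂ)*w + (D:ℂ)) := by ring
    have : ‖(w^4 : ℂ)‖ ≤ ‖w^4 + (A:ℂ)*w^3 + (B:ℂ)*w^2 + (C:ℂ)*w + (D:ℂ)‖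
        + ‖(A:ℂ)*w^3 + (B:ℂ)*w^2 + (C:ℂ)*w + (D:ℂ)‖ := by
      calc ‖(w^4 : ℂ)‖ = ‖(w^4 + (A:ℂ)*w^3 + (B:ℂ)*w^2 + (C:ℂ)*w + (D:ℂ))
          - ((A:ℂ)*w^3 + (B:ℂ)*w^2 + (C:ℂ)*w + (D:ℂ))‖ := by rw [← hw4]
        _ ≤ _ := norm_sub_le _ _
    rw [norm_pow] at this
    linarith
  have hmono2 : n^2 ≤ n^3 := by nlinarith
  have hmono1 : n ≤ n^3 := by nlinarith
  have hmono0 : 1 ≤ n^3 := by nlinarith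
  nlinarith [mul_le_mul_of_nonneg_left hw (by positivity : (0:ℝ) ≤ n^3),
    mul_nonneg hB hn0, mul_nonneg hC hn0]

lemma normsq_mk (u v : ℝ) : ‖((u:ℂ) + (v:ℂ)*Complex.I)‖^2 = u^2 + v^2 := by
  have h : ‖((u:ℂ) + (v:ℂ)*Complex.I)‖^2 = Complex.normSq ((u:ℂ) + (v:ℂ)*Complex.I) := by
    rw [← Complex.sq_norm]
  rw [h, Complex.normSq_add_mul_I]

set_option maxHeartbeats 1000000 in
theorem stmt_8 (a b₁ b₂ c : ℝ) (ha : 0 < a) (hb₁ : 0 < b₁) (hb₂ : 0 < b₂)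
    (RH1 : 0 < cA a b₁ b₂)
    (RH2 : cC a b₁ b₂ - cE c * (b₁+b₂) < cA a b₁ b₂ * (cB a b₁ b₂ - cE c))
    (RH3 : cE c * b₁ * b₂ < cD a b₁ b₂)
    (RH4 : (cA a b₁ b₂)^2 * (cD a b₁ b₂ - cE c * b₁ * b₂) <
      (cC a b₁ b₂ - cE c * (b₁+b₂)) *
        (cA a b₁ b₂ * (cB a b₁ b₂ - cE c) - cC a b₁ b₂ + cE c * (b₁+b₂)))
    (hnoroot : ¬ ∃ z : ℝ, 0 < z ∧ hq a b₁ b₂ c z = 0) :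
    ∀ τ : ℝ, 0 ≤ τ → ∀ z : ℂ, charP a b₁ b₂ c τ z = 0 → z.re < 0 := by
  -- ## Part 1 : real algebra
  have hE0 : 0 ≤ cE c := by unfold cE; positivity
  have hσ : 0 < b₁ + b₂ := by linarith
  have hπ0 : 0 ≤ cE c * b₁ * b₂ := by
    exact mul_nonneg (mul_nonneg hE0 hb₁.le) hb₂.le
  have hD : 0 < cD a b₁ b₂ := by linarith
  have hA2D : 0 < (cA a b₁ b₂)^2 * (cD a b₁ b₂ - cE c * b₁ * b₂) := by
    apply mul_pos (pow_pos RH1 2); linarith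
  have hCE : 0 < cC a b₁ b₂ - cE c*(b₁+b₂) := by
    by_contra hc
    push_neg at hc
    have hXpos : 0 ≤ cA a b₁ b₂ * (cB a b₁ b₂ - cE c) - cC a b₁ b₂ + cE c*(b₁+b₂) := by
      linarith
    nlinarith [mul_nonpos_of_nonpos_of_nonneg hc hXpos]
  have hBE : 0 < cB a b₁ b₂ - cE c := by
    by_contra hc
    push_neg at hc
    nlinarith [mul_nonpos_of_nonneg_of_nonpos RH1.le hc]
  have hC : 0 < cC a b₁ b₂ := by nlinarith [mul_nonneg hE0 hσ.le]
  have hB : 0 < cB a b₁ b₂ := by linarith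
  have hcont : Continuous (hq a b₁ b₂ c) := by unfold hq; fun_prop
  have h0 : 0 < hq a b₁ b₂ c 0 := by
    have hh : hq a b₁ b₂ c 0
        = (cD a b₁ b₂ - cE c*b₁*b₂)*(cD a b₁ b₂ + cE c*b₁*b₂) := by
      unfold hq qP qQ qR qS; ring
    rw [hh]
    apply mul_pos (by linarith) (by linarith)
  have hpos : ∀ s : ℝ, 0 ≤ s → 0 < hq a b₁ b₂ c s := by
    intro s hs
    rcases eq_or_lt_of_le hs with h | h
    · rw [← h]; exact h0
    by_contra hle
    push_neg at hle
    rcases eq_or_lt_of_le hle with heq | hlt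
    · exact hnoroot ⟨s, h, heq⟩
    · obtain ⟨r, hrmem, hr⟩ := intermediate_value_Ioo' h.le hcont.continuousOn
        (Set.mem_Ioo.2 ⟨hlt, h0⟩)
      exact hnoroot ⟨r, hrmem.1, hr⟩
  have hm₁ : 0 < 1 - a*b₁ := m1_pos a b₁ b₂ ha hb₁ hb₂ RH1 hB hC hD
  have hm₂ : 0 < 1 - a*b₂ := m1_pos a b₂ b₁ ha hb₂ hb₁
    (by rw [cA_swap]; exact RH1) (by rw [cB_swap]; exact hB)
    (by rw [cC_swap]; exact hC) (by rw [cD_swap]; exact hD)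
  have hFE : 0 < (cC a b₁ b₂ - cE c*(b₁+b₂)) *
      (cA a b₁ b₂*(cB a b₁ b₂ - cE c) - (cC a b₁ b₂ - cE c*(b₁+b₂)))
      - (cA a b₁ b₂)^2*(cD a b₁ b₂ - cE c*(b₁*b₂)) := by nlinarith [RH4]
  have hb1a : a < b₁ := b1_gt a b₁ b₂ c ha hb₁ hb₂ RH1 hE0 hCE hFE hm₁ hm₂ hpos
  have hb2a : a < b₂ := by
    apply b1_gt a b₂ b₁ c ha hb₂ hb₁ (by rw [cA_swap]; exact RH1) hE0
      (by rw [cC_swap, add_comm b₂ b₁]; exact hCE)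
      (by rw [cA_swap, cB_swap, cC_swap, cD_swap, add_comm b₂ b₁, mul_comm b₂ b₁]; exact hFE)
      hm₂ hm₁ (fun s hs => by rw [hq_swap]; exact hpos s hs)
  -- ## Part 2 : complex analysis
  intro τ hτ z₀ hchar
  by_contra hre0
  push_neg at hre0
  set Qp : ℂ → ℂ := fun w => w^4 + (cA a b₁ b₂ : ℂ)*w^3 + (cB a b₁ b₂ : ℂ)*w^2
      + (cC a b₁ b₂ : ℂ)*w + (cD a b₁ b₂ : ℂ) with hQpdef
  set num : ℂ → ℂ := fun w =>
      (cE c : ℂ) * (w + (b₁:ℂ)) * (w + (b₂:ℂ)) * Complex.exp (-(2*w*(τ:ℂ))) with hnumdef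
  have hfact : ∀ w : ℂ, Qp w
      = (w^2+((b₁-a:ℝ):ℂ)*w+((1-a*b₁:ℝ):ℂ))*(w^2+((b₂-a:ℝ):ℂ)*w+((1-a*b₂:ℝ):ℂ)) := by
    intro w; simp only [hQpdef]; unfold cA cB cC cD; push_cast; ring
  have hQne : ∀ w : ℂ, 0 ≤ w.re → Qp w ≠ 0 := by
    intro w hw
    rw [hfact w]
    exact mul_ne_zero (quad_ne_zero (by linarith) hm₁ hw)
      (quad_ne_zero (by linarith) hm₂ hw)
  have hcharQ : Qp z₀ - num z₀ = 0 := by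
    unfold charP at hchar
    simp only [hQpdef, hnumdef]
    exact hchar
  rcases eq_or_lt_of_le hE0 with hEz | hEpos
  · -- E = 0 : the characteristic function is the quartic itself
    apply hQne z₀ hre0
    have hnum0 : num z₀ = 0 := by
      simp only [hnumdef, ← hEz]
      push_cast
      ring
    rw [sub_eq_zero] at hcharQ
    rw [hcharQ, hnum0]
  -- E > 0
  set R : ℝ := cA a b₁ b₂ + cB a b₁ b₂ + cC a b₁ b₂ + cD a b₁ b₂ + 1 with hRdef
  have hR1 : 1 ≤ R := by rw [hRdef]; linarith
  set K : ℝ := cE c * ((1+b₁)*(1+b₂)) with hKdef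
  have hK0 : 0 < K := by
    apply mul_pos hEpos
    nlinarith
  set f : ℂ → ℂ := fun w => num w / Qp w with hfdef
  have hbound : ∀ w : ℂ, 0 ≤ w.re → R ≤ ‖w‖ → ‖f w‖ ≤ K / ‖w‖ := by
    intro w hw hwR
    have hn1 : (1:ℝ) ≤ ‖w‖ := le_trans hR1 hwR
    have hexp1 : ‖Complex.exp (-(2*w*(τ:ℂ)))‖ ≤ 1 := by
      rw [Complex.norm_exp]
      rw [Real.exp_le_one_iff]
      have : (-(2*w*(τ:ℂ))).re = -(2*w.re*τ) := by
        simp [Complex.mul_re]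
      rw [this]
      have : 0 ≤ 2*w.re*τ := by positivity
      linarith
    have hb₁n : ‖w + (b₁:ℂ)‖ ≤ (1+b₁)*‖w‖ := by
      calc ‖w + (b₁:ℂ)‖ ≤ ‖w‖ + b₁ := by
            calc ‖w + (b₁:ℂ)‖ ≤ ‖w‖ + ‖((b₁:ℝ):ℂ)‖ := norm_add_le _ _
              _ = ‖w‖ + b₁ := by rw [Complex.norm_real, Real.norm_eq_abs, abs_of_pos hb₁]
        _ ≤ (1+b₁)*‖w‖ := by nlinarith
    have hb₂n : ‖w + (b₂:ℂ)‖ ≤ (1+b₂)*‖w‖ := by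
      calc ‖w + (b₂:ℂ)‖ ≤ ‖w‖ + b₂ := by
            calc ‖w + (b₂:ℂ)‖ ≤ ‖w‖ + ‖((b₂:ℝ):ℂ)‖ := norm_add_le _ _
              _ = ‖w‖ + b₂ := by rw [Complex.norm_real, Real.norm_eq_abs, abs_of_pos hb₂]
        _ ≤ (1+b₂)*‖w‖ := by nlinarith
    have hnum : ‖num w‖ ≤ K * ‖w‖^2 := by
      have hcE : ‖((cE c:ℝ):ℂ)‖ = cE c := by
        rw [Complex.norm_real, Real.norm_eq_abs, abs_of_pos hEpos]
      calc ‖num w‖ = ‖(cE c:ℂ)‖ * ‖w + (b₁:ℂ)‖ * ‖w + (b₂:ℂ)‖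
            * ‖Complex.exp (-(2*w*(τ:ℂ)))‖ := by
            simp only [hnumdef, norm_mul]
        _ ≤ cE c * ((1+b₁)*‖w‖) * ((1+b₂)*‖w‖) * 1 := by
            rw [hcE]
            apply mul_le_mul _ hexp1 (norm_nonneg _) (by positivity)
            apply mul_le_mul _ hb₂n (norm_nonneg _) (by positivity)
            apply mul_le_mul_of_nonneg_left hb₁n hEpos.le
        _ = K * ‖w‖^2 := by rw [hKdef]; ring
    have hQ : ‖w‖^3 ≤ ‖Qp w‖ := by
      apply quart_lower _ _ _ _ RH1.le hB.le hC.le hD.le w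
      rw [← hRdef]; exact hwR
    have hQpos : 0 < ‖Qp w‖ := lt_of_lt_of_le (by positivity) hQ
    simp only [hfdef]
    rw [norm_div]
    calc ‖num w‖/‖Qp w‖ ≤ (K*‖w‖^2)/(‖w‖^3) := by
          apply div_le_div₀ (by positivity) hnum (by positivity) hQ
      _ = K/‖w‖ := by
          rw [div_eq_div_iff (by positivity) (by positivity)]
          ring
  have hdiff : DifferentiableOn ℂ f {w : ℂ | 0 ≤ w.re} := by
    intro w hw
    apply DifferentiableAt.differentiableWithinAt
    apply DifferentiableAt.div
    · simp only [hnumdef]; fun_prop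
    · simp only [hQpdef]; fun_prop
    · exact hQne w hw
  -- strict bound on the imaginary axis
  have hexpI : ∀ x:ℝ, ‖Complex.exp (-(2*((x:ℂ)*Complex.I)*(τ:ℂ)))‖ = 1 := by
    intro x
    rw [Complex.norm_exp]
    have : (-(2*((x:ℂ)*Complex.I)*(τ:ℂ))).re = 0 := by
      simp [Complex.mul_re, Complex.mul_im]
    rw [this, Real.exp_zero]
  have hAxisQ : ∀ x:ℝ, Qp ((x:ℂ)*Complex.I)
      = ((x^4 - cB a b₁ b₂*x^2 + cD a b₁ b₂:ℝ):ℂ)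
        + ((cC a b₁ b₂*x - cA a b₁ b₂*x^3:ℝ):ℂ)*Complex.I := by
    intro x
    simp only [hQpdef]
    push_cast
    linear_combination ((x:ℂ)^4*(Complex.I^2-1) + (cA a b₁ b₂:ℂ)*(x:ℂ)^3*Complex.I
      + (cB a b₁ b₂:ℂ)*(x:ℂ)^2) * Complex.I_sq
  have him_strict : ∀ x:ℝ, ‖f ((x:ℂ)*Complex.I)‖ < 1 := by
    intro x
    have hkey : (cE c)^2*((x^2+b₁^2)*(x^2+b₂^2)) + hq a b₁ b₂ c (x^2)
        = (x^4 - cB a b₁ b₂*x^2 + cD a b₁ b₂)^2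
          + (cC a b₁ b₂*x - cA a b₁ b₂*x^3)^2 := by
      unfold hq qP qQ qR qS; ring
    have hhq := hpos (x^2) (sq_nonneg x)
    have hQ2 : ‖Qp ((x:ℂ)*Complex.I)‖^2
        = (x^4 - cB a b₁ b₂*x^2 + cD a b₁ b₂)^2
          + (cC a b₁ b₂*x - cA a b₁ b₂*x^3)^2 := by
      rw [hAxisQ x, normsq_mk]
    have hnum2 : ‖num ((x:ℂ)*Complex.I)‖^2 = (cE c)^2*((x^2+b₁^2)*(x^2+b₂^2)) := by
      have e1 : ‖((x:ℂ)*Complex.I + (b₁:ℂ))‖^2 = x^2 + b₁^2 := by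
        rw [add_comm, normsq_mk]; ring
      have e2 : ‖((x:ℂ)*Complex.I + (b₂:ℂ))‖^2 = x^2 + b₂^2 := by
        rw [add_comm, normsq_mk]; ring
      have hcE : ‖((cE c:ℝ):ℂ)‖ = cE c := by
        rw [Complex.norm_real, Real.norm_eq_abs, abs_of_pos hEpos]
      simp only [hnumdef, norm_mul, mul_pow]
      rw [e1, e2, hexpI, hcE]
      ring
    have hlt2 : ‖num ((x:ℂ)*Complex.I)‖^2 < ‖Qp ((x:ℂ)*Complex.I)‖^2 := by
      rw [hnum2, hQ2]; linarith
    have hQpos : 0 < ‖Qp ((x:ℂ)*Complex.I)‖ := by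
      nlinarith [norm_nonneg (num ((x:ℂ)*Complex.I)), norm_nonneg (Qp ((x:ℂ)*Complex.I))]
    have hlt : ‖num ((x:ℂ)*Complex.I)‖ < ‖Qp ((x:ℂ)*Complex.I)‖ := by
      nlinarith [norm_nonneg (num ((x:ℂ)*Complex.I))]
    simp only [hfdef]
    rw [norm_div, div_lt_one hQpos]
    exact hlt
  -- Phragmén–Lindelöf
  have hPL : ∀ w : ℂ, 0 ≤ w.re → ‖f w‖ ≤ 1 := by
    intro w hw
    apply PhragmenLindelof.right_half_plane_of_tendsto_zero_on_real ?_ ?_ ?_ ?_ hw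
    · apply DifferentiableOn.diffContOnCl
      rw [Complex.closure_setOf_lt_re]
      exact hdiff
    · refine ⟨1, one_lt_two, 0, ?_⟩
      rw [Asymptotics.isBigO_iff]
      refine ⟨K, ?_⟩
      rw [Filter.eventually_inf_principal]
      filter_upwards [eventually_cobounded_le_norm R] with z hz hzs
      have h1 : ‖f z‖ ≤ K/‖z‖ := hbound z (le_of_lt hzs) hz
      have h2 : K/‖z‖ ≤ K := div_le_self hK0.le (le_trans hR1 hz)
      have h3 : ‖Real.exp (0 * ‖z‖ ^ (1:ℝ))‖ = 1 := by
        simp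
      rw [h3, mul_one]
      linarith
    · apply squeeze_zero_norm'
        (h' := (tendsto_const_nhds.div_atTop tendsto_id : Tendsto (fun x:ℝ => K/x) atTop (𝓝 0)))
      · filter_upwards [Filter.eventually_ge_atTop (max R 1)] with x hx
        have hx1 : (1:ℝ) ≤ x := le_trans (le_max_right _ _) hx
        have hxR : R ≤ x := le_trans (le_max_left _ _) hx
        have hre : (0:ℝ) ≤ ((x:ℂ)).re := by simp; linarith
        have hnx : ‖((x:ℝ):ℂ)‖ = x := by
          rw [Complex.norm_real, Real.norm_eq_abs, abs_of_pos (by linarith)]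
        have := hbound (x:ℂ) hre (by rw [hnx]; exact hxR)
        rwa [hnx] at this
    · intro x
      exact (him_strict x).le
  -- conclusion
  have hQz₀ := hQne z₀ hre0
  have hfz₀ : f z₀ = 1 := by
    have h' : Qp z₀ = num z₀ := sub_eq_zero.1 hcharQ
    simp only [hfdef]
    rw [← h', div_self hQz₀]
  have hnorm1 : ‖f z₀‖ = 1 := by rw [hfz₀]; simp
  rcases eq_or_lt_of_le hre0 with h0 | h0
  · -- root on the imaginary axis : contradiction with the strict bound
    have hz0eq : z₀ = (z₀.im:ℂ)*Complex.I := by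
      apply Complex.ext
      · simp [← h0]
      · simp
    rw [hz0eq] at hnorm1
    exact absurd hnorm1 (ne_of_lt (him_strict z₀.im))
  · -- interior root : maximum modulus principle
    set U : Set ℂ := {w : ℂ | 0 < w.re} with hUdef
    have hUopen : IsOpen U := isOpen_lt continuous_const Complex.continuous_re
    have hUconn : IsPreconnected U := (convex_halfSpace_re_gt 0).isPreconnected
    have hmax : IsMaxOn (norm ∘ f) U z₀ := by
      intro w hw
      have h1 : ‖f w‖ ≤ 1 := hPL w (le_of_lt hw)
      simp only [Function.comp, Set.mem_setOf_eq]
      rw [hnorm1]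
      exact h1
    have hsub : U ⊆ {w : ℂ | 0 ≤ w.re} := fun w hw => le_of_lt (show (0:ℝ) < w.re from hw)
    have heq := Complex.norm_eqOn_of_isPreconnected_of_isMaxOn hUconn hUopen
      (hdiff.mono hsub) h0 hmax
    set x₀ : ℝ := max R (K+1) with hx₀def
    have hx₀R : R ≤ x₀ := le_max_left _ _
    have hx₀K : K+1 ≤ x₀ := le_max_right _ _
    have hx₀pos : 0 < x₀ := by
      have : (0:ℝ) < K + 1 := by linarith
      linarith
    have hx₀U : ((x₀:ℝ):ℂ) ∈ U := by
      simp only [hUdef, Set.mem_setOf_eq, Complex.ofReal_re]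
      exact hx₀pos
    have h1 : ‖f ((x₀:ℝ):ℂ)‖ = 1 := by
      have := heq hx₀U
      simp only [Function.comp, Function.const] at this
      rw [this, hnorm1]
    have hnx : ‖((x₀:ℝ):ℂ)‖ = x₀ := by
      rw [Complex.norm_real, Real.norm_eq_abs, abs_of_pos hx₀pos]
    have h2 : ‖f ((x₀:ℝ):ℂ)‖ ≤ K/x₀ := by
      have := hbound ((x₀:ℝ):ℂ) (by simp [hx₀pos.le]) (by rw [hnx]; exact hx₀R)
      rwa [hnx] at this
    have h3 : K/x₀ < 1 := by
      rw [div_lt_one hx₀pos]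
      linarith
    linarith [h1.le, h1.ge]
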